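/- Let g = e^{−ψ} : ℝ^d → [0,∞) be a proper log-concave function with bounded support containing the origin in its interior, and let m = min ψ. Assume ψ(0) < m + 1. Then for every u ∈ supp g and every p ∈ ∂ψ(u), one has ⟨(u, g(u)), (v, ν)⟩ > 0 for all non-zero (v, ν) in the Fréchet normal cone of the lifting L_g at (u, g(u)); equivalently, ⟨p, u⟩ > −1 for all p ∈ ∂ψ(u). -/

import Mathlib

open MeasureTheory
noncomputable section

/-- The Fréchet normal cone of a set `A ⊆ ℝ^d × ℝ` at a point `p`. -/
def normalConePair {d : ℕ} (A : Set ((Fin d → ℝ) × ℝ)) (p : (Fin d → ℝ) × ℝ) :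
    Set ((Fin d → ℝ) × ℝ) :=
  {v | ∀ ε > (0 : ℝ), ∃ δ > (0 : ℝ), ∀ a ∈ A, ‖a - p‖ ≤ δ →
      dotProduct v.1 (a.1 - p.1) + v.2 * (a.2 - p.2) ≤ ε * ‖a - p‖}

/-- The lifting `L_f = {(x,y) : x ∈ cl(supp f), |y| ≤ f(x)}` of a function. -/
def lifting {d : ℕ} (f : (Fin d → ℝ) → ℝ) : Set ((Fin d → ℝ) × ℝ) :=
  {p | p.1 ∈ closure {x | 0 < f x} ∧ |p.2| ≤ f p.1}

/-- The vertical component of a normal to the lifting at a point of the upper graph is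
nonnegative. -/
lemma nu_nonneg_aux {d : ℕ} (g : (Fin d → ℝ) → ℝ) (u : Fin d → ℝ) (hu : 0 < g u)
    (v : Fin d → ℝ) (ν : ℝ)
    (hmem : (v, ν) ∈ normalConePair (lifting g) (u, g u)) : 0 ≤ ν := by
  rw [← neg_nonpos]
  refine le_of_forall_pos_le_add (fun ε hε => ?_)
  obtain ⟨δ, hδ, H⟩ := hmem ε hε
  set s : ℝ := min δ (g u) with hs
  have hs0 : 0 < s := lt_min hδ hu
  have hsgu : s ≤ g u := min_le_right _ _
  have hsδ : s ≤ δ := min_le_left _ _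
  have hmemL : ((u, g u - s) : (Fin d → ℝ) × ℝ) ∈ lifting g := by
    refine ⟨subset_closure hu, ?_⟩
    show |g u - s| ≤ g u
    rw [abs_of_nonneg (by linarith)]; linarith
  have hnorm : ‖((u, g u - s) : (Fin d → ℝ) × ℝ) - (u, g u)‖ = s := by
    have : ((u, g u - s) : (Fin d → ℝ) × ℝ) - (u, g u) = (0, -s) := by
      ext <;> simp
    rw [this, Prod.norm_def]
    simp [abs_of_pos hs0, hs0.le]
  have := H _ hmemL (by rw [hnorm]; exact hsδ)
  rw [hnorm] at this
  simp only [sub_self, dotProduct_zero, zero_add] at this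
  have h2 : ν * (g u - s - g u) = -ν * s := by ring
  rw [h2] at this
  have := (mul_le_mul_iff_left₀ hs0).mp this
  linarith

/-- Key inequality: directional derivative inequality from the normal cone condition,
obtained without limits via the convexity bound `r^t ≥ 1 + t log r`. -/
lemma key_aux {d : ℕ} (g : (Fin d → ℝ) → ℝ)
    (hglc : ∀ x y : Fin d → ℝ, ∀ t : ℝ, 0 ≤ t → t ≤ 1 →
      g x ^ t * g y ^ (1 - t) ≤ g (t • x + (1 - t) • y))
    (u : Fin d → ℝ) (hu : 0 < g u) (v : Fin d → ℝ) (ν : ℝ) (hν : 0 ≤ ν)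
    (hmem : (v, ν) ∈ normalConePair (lifting g) (u, g u))
    (z : Fin d → ℝ) (hz : 0 < g z) :
    dotProduct v (z - u) + ν * (g u * Real.log (g z / g u)) ≤ 0 := by
  set r : ℝ := g z / g u with hrdef
  have hr : 0 < r := div_pos hz hu
  set L : ℝ := Real.log r with hLdef
  set C : ℝ := max ‖z - u‖ (g u * (|L| * max 1 r)) + 1 with hCdef
  have hC1 : ‖z - u‖ ≤ C := by
    have := le_max_left ‖z - u‖ (g u * (|L| * max 1 r)); linarith
  have hC2 : g u * (|L| * max 1 r) ≤ C := by
    have := le_max_right ‖z - u‖ (g u * (|L| * max 1 r)); linarith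
  have hC : 0 < C := by
    have h1 : (0:ℝ) ≤ ‖z - u‖ := norm_nonneg _
    have h2 := le_max_left ‖z - u‖ (g u * (|L| * max 1 r))
    linarith
  refine le_of_forall_pos_le_add (fun ε hε => ?_)
  obtain ⟨δ, hδ, H⟩ := hmem (ε / C) (div_pos hε hC)
  set t : ℝ := min (δ / C) 1 with htdef
  have ht0 : 0 < t := lt_min (div_pos hδ hC) one_pos
  have ht1 : t ≤ 1 := min_le_right _ _
  have htC : t * C ≤ δ := by
    calc t * C ≤ (δ / C) * C := by
          apply mul_le_mul_of_nonneg_right (min_le_left _ _) hC.le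
      _ = δ := by field_simp
  -- the point on the lifting
  set a : (Fin d → ℝ) × ℝ := (u + t • (z - u), g u * r ^ t) with hadef
  have hcomb : u + t • (z - u) = t • z + (1 - t) • u := by module
  have ha2eq : g u * r ^ t = g z ^ t * g u ^ (1 - t) := by
    rw [hrdef, Real.div_rpow hz.le hu.le, Real.rpow_sub hu, Real.rpow_one]
    field_simp
  have hga1 : g z ^ t * g u ^ (1 - t) ≤ g (u + t • (z - u)) := by
    rw [hcomb]; exact hglc z u t ht0.le ht1
  have ha2pos : 0 < g u * r ^ t := by positivity
  have haL : a ∈ lifting g := by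
    constructor
    · apply subset_closure
      show 0 < g (u + t • (z - u))
      calc (0:ℝ) < g z ^ t * g u ^ (1 - t) := by positivity
        _ ≤ _ := hga1
    · show |g u * r ^ t| ≤ g (u + t • (z - u))
      rw [abs_of_pos ha2pos, ha2eq]; exact hga1
  -- r ^ t = exp (t * L)
  have hrt : r ^ t = Real.exp (t * L) := by
    rw [hLdef, Real.rpow_def_of_pos hr, mul_comm]
  -- bound |r^t - 1| ≤ t * (|L| * max 1 r)
  have habs : |r ^ t - 1| ≤ t * (|L| * max 1 r) := by
    rcases le_or_gt 0 L with hL | hL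
    · have h1 : 1 + t * L ≤ Real.exp (t * L) := by
        have := Real.add_one_le_exp (t * L); linarith
      have h2 : 1 - t * L ≤ Real.exp (-(t * L)) := by
        have := Real.add_one_le_exp (-(t * L)); linarith
      have h3 : Real.exp (t * L) * (1 - t * L) ≤ 1 := by
        have := mul_le_mul_of_nonneg_left h2 (Real.exp_pos (t * L)).le
        rwa [← Real.exp_add, add_neg_cancel, Real.exp_zero] at this
      have h4 : Real.exp (t * L) - 1 ≤ t * L * Real.exp (t * L) := by nlinarith
      have h5 : Real.exp (t * L) ≤ Real.exp L := by
        apply Real.exp_le_exp.mpr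
        nlinarith
      have h6 : Real.exp L = r := by rw [hLdef, Real.exp_log hr]
      have h7 : r ≤ max 1 r := le_max_right _ _
      rw [hrt, abs_of_nonneg (by nlinarith [Real.add_one_le_exp (t * L)] : (0:ℝ) ≤ Real.exp (t * L) - 1)]
      have h8 : t * L * Real.exp (t * L) ≤ t * L * r := by
        rcases eq_or_lt_of_le (mul_nonneg ht0.le hL) with h | h
        · rw [← h]; simp
        · exact mul_le_mul_of_nonneg_left (h5.trans_eq h6) (by linarith)
      calc Real.exp (t * L) - 1 ≤ t * L * r := le_trans h4 h8
        _ ≤ t * (|L| * max 1 r) := by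
            rw [abs_of_nonneg hL]
            have : L * r ≤ L * max 1 r := mul_le_mul_of_nonneg_left h7 hL
            nlinarith
    · have h1 : 1 + t * L ≤ Real.exp (t * L) := by
        have := Real.add_one_le_exp (t * L); linarith
      have h2 : Real.exp (t * L) ≤ 1 := by
        rw [← Real.exp_zero]
        exact Real.exp_le_exp.mpr (mul_nonpos_of_nonneg_of_nonpos ht0.le hL.le)
      rw [hrt, abs_of_nonpos (by linarith)]
      have h3 : 1 - Real.exp (t * L) ≤ -(t * L) := by linarith
      have h4 : 1 ≤ max 1 r := le_max_left _ _
      have h5 : |L| = -L := abs_of_neg hL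
      calc -(Real.exp (t * L) - 1) ≤ -(t * L) := by linarith
        _ = t * |L| := by rw [h5]; ring
        _ ≤ t * (|L| * max 1 r) :=
            mul_le_mul_of_nonneg_left (le_mul_of_one_le_right (abs_nonneg L) h4) ht0.le
  -- norm bound
  have hnormle : ‖a - ((u, g u) : (Fin d → ℝ) × ℝ)‖ ≤ t * C := by
    have hsub : a - ((u, g u) : (Fin d → ℝ) × ℝ) = (t • (z - u), g u * (r ^ t - 1)) := by
      rw [hadef]; ext <;> simp <;> ring
    rw [hsub, Prod.norm_def]
    apply max_le
    · simp only [norm_smul, Real.norm_eq_abs, abs_of_pos ht0]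
      exact mul_le_mul_of_nonneg_left hC1 ht0.le
    · show ‖g u * (r ^ t - 1)‖ ≤ t * C
      rw [Real.norm_eq_abs, abs_mul, abs_of_pos hu]
      calc g u * |r ^ t - 1| ≤ g u * (t * (|L| * max 1 r)) :=
            mul_le_mul_of_nonneg_left habs hu.le
        _ = t * (g u * (|L| * max 1 r)) := by ring
        _ ≤ t * C := mul_le_mul_of_nonneg_left hC2 ht0.le
  have hnormδ : ‖a - ((u, g u) : (Fin d → ℝ) × ℝ)‖ ≤ δ := hnormle.trans htC
  have hmain := H a haL hnormδ
  -- simplify the left side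
  have hlhs1 : dotProduct v (a.1 - u) = t * dotProduct v (z - u) := by
    have : a.1 - u = t • (z - u) := by rw [hadef]; simp
    rw [this, dotProduct_smul]; simp
  have hexp : 1 + t * L ≤ Real.exp (t * L) := by
    have := Real.add_one_le_exp (t * L); linarith
  have hlhs2 : ν * (g u * (t * L)) ≤ ν * (a.2 - g u) := by
    have h1 : a.2 - g u = g u * (r ^ t - 1) := by rw [hadef]; simp; ring
    rw [h1, hrt]
    apply mul_le_mul_of_nonneg_left _ hν
    exact mul_le_mul_of_nonneg_left (by linarith : t * L ≤ Real.exp (t * L) - 1) hu.le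
  have hrhs : (ε / C) * ‖a - ((u, g u) : (Fin d → ℝ) × ℝ)‖ ≤ ε * t := by
    calc (ε / C) * ‖a - ((u, g u) : (Fin d → ℝ) × ℝ)‖ ≤ (ε / C) * (t * C) :=
          mul_le_mul_of_nonneg_left hnormle (div_pos hε hC).le
      _ = ε * t := by field_simp
  have hfinal : t * (dotProduct v (z - u) + ν * (g u * L)) ≤ t * ε := by
    have h : dotProduct v (a.1 - u) + ν * (a.2 - g u) ≤
        (ε / C) * ‖a - ((u, g u) : (Fin d → ℝ) × ℝ)‖ := hmain
    rw [hlhs1] at h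
    have hexpand : t * (dotProduct v (z - u) + ν * (g u * L)) =
        t * dotProduct v (z - u) + ν * (g u * (t * L)) := by ring
    rw [hexpand]
    calc t * dotProduct v (z - u) + ν * (g u * (t * L))
        ≤ t * dotProduct v (z - u) + ν * (a.2 - g u) := by linarith [hlhs2]
      _ ≤ ε / C * ‖a - ((u, g u) : (Fin d → ℝ) × ℝ)‖ := h
      _ ≤ ε * t := hrhs
      _ = t * ε := by ring
  have hA : dotProduct v (z - u) + ν * (g u * L) ≤ ε :=
    (mul_le_mul_iff_right₀ ht0).mp hfinal
  show dotProduct v (z - u) + ν * (g u * L) ≤ 0 + ε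
  linarith

theorem starlike_of_center_near_max {d : ℕ} (g : (Fin d → ℝ) → ℝ)
    (hg0 : ∀ x, 0 ≤ g x) (hgusc : UpperSemicontinuous g)
    (hglc : ∀ x y : Fin d → ℝ, ∀ t : ℝ, 0 ≤ t → t ≤ 1 →
      g x ^ t * g y ^ (1 - t) ≤ g (t • x + (1 - t) • y))
    (hgint : Integrable g) (hgpos : 0 < ∫ x, g x)
    (hgsupp : Bornology.IsBounded {x | 0 < g x})
    (h0 : (0 : Fin d → ℝ) ∈ interior {x | 0 < g x})
    (hmin : ∀ x, g x < Real.exp 1 * g 0) :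
    (∀ u : Fin d → ℝ, 0 < g u → ∀ v : Fin d → ℝ, ∀ ν : ℝ,
      (v, ν) ∈ normalConePair (lifting g) (u, g u) → (v, ν) ≠ 0 →
        0 < dotProduct v u + ν * g u) ∧
    (∀ u : Fin d → ℝ, 0 < g u → ∀ p : Fin d → ℝ,
      (∀ y, 0 < g y →
        -Real.log (g u) + dotProduct p (y - u) ≤ -Real.log (g y)) →
      -1 < dotProduct p u) := by
  have hg0pos : 0 < g 0 := by
    by_contra h
    push_neg at h
    have hx : ∃ x, 0 < g x := by
      by_contra hx
      push_neg at hx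
      have hzero : ∀ x, g x = 0 := fun x => le_antisymm (hx x) (hg0 x)
      rw [show g = fun _ => (0:ℝ) from funext hzero] at hgpos
      simp at hgpos
    obtain ⟨x, hx⟩ := hx
    nlinarith [hmin x, Real.exp_pos 1]
  have hlogkey : ∀ u : Fin d → ℝ, 0 < g u →
      Real.log (g u) < 1 + Real.log (g 0) := by
    intro u hu
    have h1 := Real.log_lt_log hu (hmin u)
    rwa [Real.log_mul (Real.exp_ne_zero 1) hg0pos.ne', Real.log_exp] at h1
  constructor
  · intro u hu v ν hmem hne
    have hν := nu_nonneg_aux g u hu v ν hmem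
    have hkey0 := key_aux g hglc u hu v ν hν hmem 0 hg0pos
    rw [zero_sub, dotProduct_neg,
      Real.log_div hg0pos.ne' hu.ne'] at hkey0
    have hc : -1 < Real.log (g 0) - Real.log (g u) := by
      have := hlogkey u hu; linarith
    rcases eq_or_lt_of_le hν with hν0 | hνpos
    · -- ν = 0; use a point of the support in the direction of v
      have hv : v ≠ 0 := by
        intro hv0
        exact hne (by rw [hv0, ← hν0]; rfl)
      have hvnorm : 0 < ‖v‖ := norm_pos_iff.mpr hv
      rw [mem_interior_iff_mem_nhds, Metric.mem_nhds_iff] at h0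
      obtain ⟨ρ, hρ, hball⟩ := h0
      set c : ℝ := ρ / (2 * ‖v‖) with hcdef
      have hcpos : 0 < c := div_pos hρ (by linarith)
      have hzmem : c • v ∈ Metric.ball (0 : Fin d → ℝ) ρ := by
        rw [Metric.mem_ball, dist_zero_right, norm_smul, Real.norm_eq_abs,
          abs_of_pos hcpos]
        have hcv : c * ‖v‖ = ρ / 2 := by
          rw [hcdef]; field_simp
        rw [hcv]; linarith
      have hz : 0 < g (c • v) := hball hzmem
      have hkey := key_aux g hglc u hu v ν hν hmem (c • v) hz
      rw [← hν0, zero_mul, add_zero] at hkey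
      have hdd : dotProduct v (c • v - u) =
          c * dotProduct v v - dotProduct v u := by
        rw [dotProduct_sub, dotProduct_smul]; simp
      rw [hdd] at hkey
      have hvv : 0 < dotProduct v v := by
        have h1 : dotProduct v v ≠ 0 :=
          fun h => hv (dotProduct_self_eq_zero.mp h)
        have h2 : 0 ≤ dotProduct v v :=
          Finset.sum_nonneg fun i _ => mul_self_nonneg _
        exact h2.lt_of_ne (Ne.symm h1)
      rw [← hν0, zero_mul, add_zero]
      nlinarith [mul_pos hcpos hvv]
    · -- 0 < ν
      nlinarith [mul_pos hνpos hu]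
  · intro u hu p hp
    have h := hp 0 hg0pos
    rw [zero_sub, dotProduct_neg] at h
    have h1 := hlogkey u hu
    linarith
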